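/- Let X and Y be compact metric spaces, each containing at least two points, and let f : X → Y be a homeomorphism. Suppose f is η-quasisymmetric for some homeomorphism η : [0, ∞) → [0, ∞), i.e., for all x, y, z ∈ X and all t ≥ 0, d(x, y) ≤ t·d(x, z) implies d(f(x), f(y)) ≤ η(t)·d(f(x), f(z)). If Y is linearly locally contractible with some constant λ ≥ 1, then X is linearly locally contractible with some constant λ' ≥ 1. -/

import Mathlib

open Metric Set

/-- A metric space `Z` is linearly locally contractible with constant `lam ≥ 1` if every
open ball `B(z, r)` with `0 < r < diam(Z)/lam` is contractible inside `B(z, lam·r)`: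
there is a homotopy, taking values in `B(z, lam·r)`, from the inclusion of `B(z, r)` to
a constant map. -/
def LinLocContractible (Z : Type*) [MetricSpace Z] (lam : ℝ) : Prop :=
  ∀ (z : Z) (r : ℝ), 0 < r → r < Metric.diam (Set.univ : Set Z) / lam →
    ∃ H : unitInterval × Metric.ball z r → Z, Continuous H ∧
      (∀ p, H p ∈ Metric.ball z (lam * r)) ∧
      (∀ y, H (0, y) = (y : Z)) ∧ ∃ c : Z, ∀ y, H (1, y) = c

lemma homeoNNReal_map_zero (η : NNReal ≃ₜ NNReal) : η 0 = 0 := by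
  rcases Continuous.strictMono_of_inj η.continuous η.injective with hm | ha
  · obtain ⟨a, ha⟩ := η.surjective 0
    rcases eq_or_lt_of_le (zero_le : 0 ≤ a) with h | h
    · rw [← h] at ha; exact ha
    · exact absurd (ha ▸ hm h) (by simp)
  · obtain ⟨b, hb⟩ := η.surjective (η 0 + 1)
    rcases eq_or_lt_of_le (zero_le : 0 ≤ b) with h | h
    · simp [← h] at hb
    · have := ha h
      rw [hb] at this
      simp at this

lemma homeoNNReal_pos (η : NNReal ≃ₜ NNReal) {x : NNReal} (hx : x ≠ 0) : 0 < η x := by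
  rcases eq_or_lt_of_le (zero_le : 0 ≤ η x) with h | h
  · exact absurd (η.injective (h.symm.trans (homeoNNReal_map_zero η).symm)) hx
  · exact h

set_option maxHeartbeats 2000000 in
/-- Let `X`, `Y` be compact metric spaces, each with at least two
points, and let `f : X → Y` be an `η`-quasisymmetric homeomorphism. If `Y` is linearly
locally contractible with some constant `lam ≥ 1`, then so is `X` (with some constant
`lam' ≥ 1`). -/
theorem linLocContractible_of_quasisymmetric
    {X Y : Type*} [MetricSpace X] [CompactSpace X] [MetricSpace Y] [CompactSpace Y]
    (hX : ∃ a b : X, a ≠ b) (hY : ∃ a b : Y, a ≠ b)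
    (f : X ≃ₜ Y) (η : NNReal ≃ₜ NNReal)
    (hqs : ∀ (x y z : X) (t : NNReal), nndist x y ≤ t * nndist x z →
      nndist (f x) (f y) ≤ η t * nndist (f x) (f z))
    (lam : ℝ) (hlam : 1 ≤ lam) (hllc : LinLocContractible Y lam) :
    ∃ lam' : ℝ, 1 ≤ lam' ∧ LinLocContractible X lam' := by
  obtain ⟨a, b, hab⟩ := hX
  obtain ⟨a', b', hab'⟩ := hY
  set DX := Metric.diam (Set.univ : Set X) with hDXdef
  set DY := Metric.diam (Set.univ : Set Y) with hDYdef
  have hDX : 0 < DX :=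
    lt_of_lt_of_le (dist_pos.2 hab) (dist_le_diam_of_mem isCompact_univ.isBounded trivial trivial)
  have hDY : 0 < DY :=
    lt_of_lt_of_le (dist_pos.2 hab') (dist_le_diam_of_mem isCompact_univ.isBounded trivial trivial)
  set Λ : NNReal := ⟨lam, by linarith⟩ with hΛdef
  have hΛ : (Λ : ℝ) = lam := rfl
  set e2 : NNReal := η 2 with he2def
  have he2 : 0 < e2 := homeoNNReal_pos η (by norm_num)
  set t : NNReal := 2 * Λ * e2 with htdef
  have ht : 0 < t := by
    apply mul_pos (mul_pos (by norm_num) _) he2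
    rw [← NNReal.coe_pos, hΛ]; linarith
  set u : NNReal := η.symm ((t + 1)⁻¹) with hudef
  have hu : 0 < u := homeoNNReal_pos η.symm (by
    simp only [ne_eq, inv_eq_zero]
    intro h
    exact absurd h (by positivity))
  set s : NNReal := u⁻¹ with hsdef
  have hs : 0 < s := by positivity
  set v : NNReal := η.symm ((2 * e2 * Λ + 1)⁻¹) with hvdef
  have hv : 0 < v := homeoNNReal_pos η.symm (by
    simp only [ne_eq, inv_eq_zero]
    intro h
    exact absurd h (by positivity))
  have hv' : (0 : ℝ) < (v : ℝ) := hv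
  have hs' : (0 : ℝ) < (s : ℝ) := hs
  set lam' : ℝ := 1 + (s : ℝ) + 4 / (v : ℝ) with hlam'def
  have hlam'1 : 1 ≤ lam' := by
    have : 0 ≤ 4 / (v : ℝ) := by positivity
    simp only [hlam'def]; linarith
  have hlam'0 : 0 < lam' := by linarith
  refine ⟨lam', hlam'1, ?_⟩
  intro z r hr hrlt
  -- the supremum of distances to the center within the ball
  set S := (dist z) '' (Metric.ball z r) with hSdef
  have hSne : S.Nonempty := ⟨dist z z, z, mem_ball_self hr, rfl⟩
  have hSbdd : BddAbove S := by
    refine ⟨r, ?_⟩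
    rintro _ ⟨x, hx, rfl⟩
    rw [dist_comm]
    exact le_of_lt hx
  set M := sSup S with hMdef
  by_cases hM : M ≤ 0
  · -- degenerate case : the ball is {z}
    refine ⟨fun _ => z, continuous_const, ?_, ?_, z, fun _ => rfl⟩
    · intro p
      exact mem_ball_self (by positivity)
    · intro y
      have h1 : dist z (y : X) ≤ M := le_csSup hSbdd ⟨y, y.2, rfl⟩
      have h2 : dist z (y : X) = 0 := le_antisymm (h1.trans hM) dist_nonneg
      show z = (y : X)
      exact dist_eq_zero.1 h2
  · push_neg at hM
    obtain ⟨d₁, hd₁mem, hd₁⟩ := exists_lt_of_lt_csSup hSne (half_lt_self hM)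
    obtain ⟨x₁, hx₁B, rfl⟩ := hd₁mem
    have hx₁pos : 0 < dist z x₁ := lt_trans (by linarith) hd₁
    have hx₁ne : x₁ ≠ z := by
      intro h; rw [h] at hx₁pos; simp at hx₁pos
    -- a far point
    obtain ⟨x₀, hx₀⟩ : ∃ x₀ : X, DX / 4 ≤ dist z x₀ := by
      by_contra h
      push_neg at h
      have : DX ≤ DX / 2 := by
        apply Metric.diam_le_of_forall_dist_le (by linarith)
        intro x _ y _
        have h1 := h x
        have h2 := h y
        have := dist_triangle x z y
        rw [dist_comm x z] at this
        linarith
      linarith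
    -- Step 1 : distances in the image ball are controlled by `e2 * D₁`
    have step1 : ∀ x ∈ Metric.ball z r, nndist (f z) (f x) ≤ e2 * nndist (f z) (f x₁) := by
      intro x hx
      apply hqs
      rw [← NNReal.coe_le_coe]
      push_cast [coe_nndist]
      have h1 : dist z x ≤ M := le_csSup hSbdd ⟨x, hx, rfl⟩
      linarith
    -- Step 2 : D₁ is small compared to diam Y
    have step2 : nndist (f z) (f x₁) ≤ (2 * e2 * Λ + 1)⁻¹ * nndist (f z) (f x₀) := by
      have key := hqs z x₁ x₀ v ?_
      · rwa [hvdef, η.apply_symm_apply] at key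
      · rw [← NNReal.coe_le_coe]
        push_cast [coe_nndist]
        have h1 : dist z x₁ < r := by rw [dist_comm]; exact hx₁B
        have h2 : DX ≤ 4 * dist z x₀ := by linarith
        have h3 : r < DX / lam' := hrlt
        have h4 : 4 / (v : ℝ) ≤ lam' := by
          simp only [hlam'def]; linarith
        have h5 : 4 ≤ (v : ℝ) * lam' := by
          rw [div_le_iff₀ hv'] at h4
          nlinarith
        have h6 : DX / lam' ≤ (v : ℝ) * dist z x₀ := by
          rw [div_le_iff₀ hlam'0]
          nlinarith [dist_nonneg (x := z) (y := x₀)]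
        linarith
    set D₁ : ℝ := dist (f z) (f x₁) with hD₁def
    have hD₁ : 0 < D₁ := dist_pos.2 fun h => hx₁ne (f.injective h.symm)
    set ρ : ℝ := 2 * (e2 : ℝ) * D₁ with hρdef
    have he2' : (0 : ℝ) < (e2 : ℝ) := he2
    have hρ : 0 < ρ := by positivity
    have hc : ((2 * e2 * Λ + 1 : NNReal) : ℝ) = 2 * (e2 : ℝ) * lam + 1 := by
      push_cast [hΛ]; ring
    have hρlt : ρ < DY / lam := by
      have h2 : D₁ ≤ ((2 * e2 * Λ + 1 : NNReal) : ℝ)⁻¹ * dist (f z) (f x₀) := by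
        have := step2
        rw [← NNReal.coe_le_coe] at this
        push_cast [coe_nndist] at this
        exact this
      have h3 : dist (f z) (f x₀) ≤ DY :=
        dist_le_diam_of_mem isCompact_univ.isBounded trivial trivial
      have hcpos : (0 : ℝ) < 2 * (e2 : ℝ) * lam + 1 := by nlinarith
      rw [hc] at h2
      have h4 : D₁ ≤ (2 * (e2 : ℝ) * lam + 1)⁻¹ * DY := by
        have : (0 : ℝ) ≤ (2 * (e2 : ℝ) * lam + 1)⁻¹ := by positivity
        nlinarith
      rw [lt_div_iff₀ (by linarith : (0:ℝ) < lam)]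
      have h5 : (2 * (e2 : ℝ) * lam + 1)⁻¹ * (2 * (e2:ℝ) * lam + 1) = 1 := by
        field_simp
      nlinarith
    have hmem : ∀ x : X, x ∈ Metric.ball z r → f x ∈ Metric.ball (f z) ρ := by
      intro x hx
      rw [Metric.mem_ball, dist_comm]
      have h1 := step1 x hx
      rw [← NNReal.coe_le_coe] at h1
      push_cast [coe_nndist] at h1
      have : (e2 : ℝ) * D₁ < ρ := by rw [hρdef]; nlinarith
      linarith
    obtain ⟨G, Gcont, Gmem, G0, c, G1⟩ := hllc (f z) ρ hρ hρlt
    refine ⟨fun q => f.symm (G (q.1, ⟨f q.2, hmem _ q.2.2⟩)), ?_, ?_, ?_, f.symm c, ?_⟩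
    · apply f.symm.continuous.comp
      apply Gcont.comp
      exact continuous_fst.prodMk
        ((f.continuous.comp (continuous_subtype_val.comp continuous_snd)).subtype_mk _)
    · intro p
      rw [Metric.mem_ball]
      set w := G (p.1, ⟨f p.2, hmem _ p.2.2⟩) with hwdef
      have hw : w ∈ Metric.ball (f z) (lam * ρ) := Gmem _
      have hfw : f (f.symm w) = w := f.apply_symm_apply w
      have key : nndist z (f.symm w) ≤ s * nndist z x₁ := by
        by_contra hcon
        push_neg at hcon
        have h5 : nndist z x₁ ≤ u * nndist z (f.symm w) := by
          have h5a : s * nndist z x₁ ≤ nndist z (f.symm w) := le_of_lt hcon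
          calc nndist z x₁ = u * (s * nndist z x₁) := by
                rw [← mul_assoc, hsdef, mul_inv_cancel₀ (ne_of_gt hu), one_mul]
            _ ≤ u * nndist z (f.symm w) := mul_le_mul_right h5a u
        have h6 := hqs z x₁ (f.symm w) u h5
        rw [hudef, η.apply_symm_apply, hfw] at h6
        have h7 : nndist (f z) w ≤ t * nndist (f z) (f x₁) := by
          rw [← NNReal.coe_le_coe]
          push_cast [coe_nndist]
          have h7a : dist w (f z) < lam * ρ := Metric.mem_ball.1 hw
          rw [dist_comm] at h7a
          have h7b : ((t : NNReal) : ℝ) = 2 * lam * (e2 : ℝ) := by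
            rw [htdef]; push_cast [hΛ]; ring
          rw [h7b]
          rw [hρdef] at h7a
          nlinarith
        have hD₁' : (0 : NNReal) < nndist (f z) (f x₁) := by
          rw [← NNReal.coe_pos, coe_nndist]; exact hD₁
        have h8 : nndist (f z) (f x₁) ≤ ((t + 1)⁻¹ * t) * nndist (f z) (f x₁) := by
          calc nndist (f z) (f x₁) ≤ (t + 1)⁻¹ * nndist (f z) w := h6
            _ ≤ (t + 1)⁻¹ * (t * nndist (f z) (f x₁)) := mul_le_mul_right h7 _
            _ = ((t + 1)⁻¹ * t) * nndist (f z) (f x₁) := by ring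
        have hlt : (t + 1)⁻¹ * t < 1 := by
          rw [← NNReal.coe_lt_coe]
          push_cast
          have htpos : (0 : ℝ) < (t : ℝ) := ht
          rw [inv_mul_lt_iff₀ (by linarith)]
          linarith
        have := h8.trans_lt (mul_lt_mul_of_pos_right hlt hD₁')
        rw [one_mul] at this
        exact lt_irrefl _ this
      rw [← NNReal.coe_le_coe] at key
      push_cast [coe_nndist] at key
      have hzx₁ : dist z x₁ < r := by rw [dist_comm]; exact hx₁B
      have hsl : (s : ℝ) ≤ lam' := by
        have : 0 ≤ 4 / (v : ℝ) := by positivity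
        simp only [hlam'def]; linarith
      rw [dist_comm]
      calc dist z (f.symm w) ≤ (s : ℝ) * dist z x₁ := key
        _ < (s : ℝ) * r := by exact mul_lt_mul_of_pos_left hzx₁ hs'
        _ ≤ lam' * r := mul_le_mul_of_nonneg_right hsl (le_of_lt hr)
    · intro y
      show f.symm (G (0, ⟨f y, _⟩)) = y
      rw [G0]
      exact f.symm_apply_apply y
    · intro y
      show f.symm (G (1, ⟨f y, _⟩)) = f.symm c
      rw [G1]
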